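/- Let Ω be a finite set, θ̃ : Ω → Θ a function to a finite set Θ, μ₀ a full-support prior on Ω, and let τ = Σₖ τₖ δ_{μₖ} be a finitely supported Bayes-plausible distribution over posteriors on Ω (Σₖ τₖ μₖ = μ₀). Suppose there exist two indices k ≠ k' with τₖ, τ_{k'} > 0 such that the pushforwards of μₖ and μ_{k'} under θ̃ are equal but μₖ ≠ μ_{k'}. Define τ' by merging these two atoms: replace δ_{μₖ} and δ_{μ_{k'}} by a single atom at μ* = (τₖ μₖ + τ_{k'} μ_{k'})/(τₖ + τ_{k'}) with weight τₖ + τ_{k'}. Then τ' is Bayes plausible, τ is a mean-preserving spread of τ' with τ ≠ τ', and the θ̃-marginal distributions over posteriors about Θ of τ and τ' coincide. -/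

import Mathlib

open Finset

open scoped Classical in
/-- Merging two atoms of a Bayes-plausible distribution over posteriors that share the same
θ̃-marginal yields a Bayes-plausible distribution τ' of which τ is a strict mean-preserving
spread, with identical θ̃-marginal distributions over posteriors. -/
theorem stmt_9 {Ω Θ : Type*} [Fintype Ω] [Fintype Θ]
    (tθ : Ω → Θ) (μ₀ : Ω → ℝ)
    (K : ℕ) (t : Fin K → ℝ) (μ : Fin K → Ω → ℝ)
    (htpos : ∀ i, 0 < t i) (htone : ∑ i, t i = 1)
    (hprob : ∀ i, (∀ ω, 0 ≤ μ i ω) ∧ ∑ ω, μ i ω = 1)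
    (hbayes : ∑ i, t i • μ i = μ₀)
    (k k' : Fin K) (hkk : k ≠ k')
    (push : (Ω → ℝ) → Θ → ℝ)
    (hpush : ∀ m j, push m j = ∑ ω ∈ Finset.univ.filter (fun ω => tθ ω = j), m ω)
    (hmarg : push (μ k) = push (μ k')) (hne : μ k ≠ μ k')
    (μstar : Ω → ℝ)
    (hμstar : μstar = (t k + t k')⁻¹ • (t k • μ k + t k' • μ k')) :
    ((∀ ω, 0 ≤ μstar ω) ∧ ∑ ω, μstar ω = 1) ∧
    ((∑ i ∈ (Finset.univ.erase k).erase k', t i • μ i) + (t k + t k') • μstar = μ₀) ∧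
    ((t k / (t k + t k')) • μ k + (t k' / (t k + t k')) • μ k' = μstar) ∧
    (μ k ≠ μstar ∨ μ k' ≠ μstar) ∧
    push μstar = push (μ k) ∧
    (∀ νq : Θ → ℝ,
      (∑ i, if push (μ i) = νq then t i else 0) =
      (∑ i ∈ (Finset.univ.erase k).erase k', if push (μ i) = νq then t i else 0) +
      (if push μstar = νq then t k + t k' else 0)) := by
  have hs : 0 < t k + t k' := add_pos (htpos k) (htpos k')
  have hs0 : (t k + t k') ≠ 0 := ne_of_gt hs
  have hμstarω : ∀ ω, μstar ω = (t k + t k')⁻¹ * (t k * μ k ω + t k' * μ k' ω) := by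
    intro ω; rw [hμstar]; simp [Pi.smul_apply, smul_eq_mul]
  have hsmul : (t k + t k') • μstar = t k • μ k + t k' • μ k' := by
    rw [hμstar, smul_inv_smul₀ hs0]
  -- split sums
  have hk'mem : k' ∈ (Finset.univ : Finset (Fin K)).erase k := by
    simp [Ne.symm hkk]
  have hsplit : ∀ f : Fin K → Ω → ℝ,
      (∑ i, f i) = (∑ i ∈ (Finset.univ.erase k).erase k', f i) + f k' + f k := by
    intro f
    rw [← Finset.sum_erase_add _ _ (Finset.mem_univ k),
        ← Finset.sum_erase_add _ _ hk'mem]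
  have hsplit' : ∀ f : Fin K → ℝ,
      (∑ i, f i) = (∑ i ∈ (Finset.univ.erase k).erase k', f i) + f k' + f k := by
    intro f
    rw [← Finset.sum_erase_add _ _ (Finset.mem_univ k),
        ← Finset.sum_erase_add _ _ hk'mem]
  have hpushstar : push μstar = push (μ k) := by
    funext j
    have h1 : push (μ k') j = push (μ k) j := by rw [hmarg]
    rw [hpush, hpush] at h1 ⊢
    have : ∑ ω ∈ Finset.univ.filter (fun ω => tθ ω = j), μstar ω
        = (t k + t k')⁻¹ * (t k * ∑ ω ∈ Finset.univ.filter (fun ω => tθ ω = j), μ k ω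
          + t k' * ∑ ω ∈ Finset.univ.filter (fun ω => tθ ω = j), μ k' ω) := by
      simp only [hμstarω, Finset.mul_sum, mul_add, Finset.sum_add_distrib]
    rw [this, h1]
    field_simp
  refine ⟨⟨?_, ?_⟩, ?_, ?_, ?_, hpushstar, ?_⟩
  · intro ω
    rw [hμstarω]
    exact mul_nonneg (inv_nonneg.2 hs.le)
      (add_nonneg (mul_nonneg (htpos k).le ((hprob k).1 ω))
        (mul_nonneg (htpos k').le ((hprob k').1 ω)))
  · have : ∑ ω, μstar ω = (t k + t k')⁻¹ * (t k * ∑ ω, μ k ω + t k' * ∑ ω, μ k' ω) := by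
      simp only [hμstarω, Finset.mul_sum, mul_add, Finset.sum_add_distrib]
    rw [this, (hprob k).2, (hprob k').2]
    field_simp
  · rw [hsmul, ← hbayes, hsplit (fun i => t i • μ i)]
    abel
  · rw [hμstar, smul_add, smul_smul, smul_smul, div_eq_inv_mul, div_eq_inv_mul]
  · by_contra h
    push_neg at h
    exact hne (h.1.trans h.2.symm)
  · intro νq
    rw [hsplit' (fun i => if push (μ i) = νq then t i else 0)]
    have : (if push (μ k') = νq then t k' else 0) + (if push (μ k) = νq then t k else 0)
        = (if push μstar = νq then t k + t k' else 0) := by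
      rw [hpushstar, ← hmarg]
      split_ifs <;> ring
    rw [add_assoc, this]
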